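/- arXiv:2501.08058 — 2 statements merged into one kernel-verified Lean document; each statement's English description precedes it below -/
import Mathlib

section
/- (Theorem 1, safety part.) Let x, y, θ : ℝ → ℝ be differentiable on [0, ∞) and suppose that at every t ≥ 0 with r(t) ∈ (r_i, r_o), the closed-loop equations hold: ẋ(t) = v·cos θ(t), ẏ(t) = v·sin θ(t), θ̇(t) = v/d + v·k₁·Ω(v·ē_x(t)) + v·k₂·((r(t) − d)/r(t))·η(r(t) − d). If r(0) ∈ (r_i, r_o), then r_i < r(t) < r_o for all t ≥ 0. -/
/-- Range r(t) = √((x(t) − x_T)² + (y(t) − y_T)²). -/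
noncomputable def rng (x y : ℝ → ℝ) (xT yT : ℝ) (t : ℝ) : ℝ :=
  Real.sqrt ((x t - xT) ^ 2 + (y t - yT) ^ 2)

/-- Transformed error ē_x(t) = (x(t) − x_T)·cos θ(t) + (y(t) − y_T)·sin θ(t). -/
noncomputable def ebx (x y θ : ℝ → ℝ) (xT yT : ℝ) (t : ℝ) : ℝ :=
  (x t - xT) * Real.cos (θ t) + (y t - yT) * Real.sin (θ t)

/-- Transformed error ē_y(t) = −(x(t) − x_T)·sin θ(t) + (y(t) − y_T)·cos θ(t) + d. -/
noncomputable def eby (x y θ : ℝ → ℝ) (xT yT d : ℝ) (t : ℝ) : ℝ :=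
  -(x t - xT) * Real.sin (θ t) + (y t - yT) * Real.cos (θ t) + d

/-- The asymmetric barrier Lyapunov function V_r. -/
noncomputable def Vr (δa δb e : ℝ) : ℝ :=
  if 0 < e then (1 / 2) * Real.log (δb ^ 2 / (δb ^ 2 - e ^ 2))
  else (1 / 2) * Real.log (δa ^ 2 / (δa ^ 2 - e ^ 2))

/-- η(e) = 1/(δ_b² − e²) for e > 0 and η(e) = 1/(δ_a² − e²) for e ≤ 0. -/
noncomputable def eta (δa δb e : ℝ) : ℝ :=
  if 0 < e then 1 / (δb ^ 2 - e ^ 2) else 1 / (δa ^ 2 - e ^ 2)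


lemma aux_deriv (δ s : ℝ) (hne : δ^2 - s^2 ≠ 0) :
    HasDerivAt (fun u : ℝ => (1/2) * (Real.log (δ^2) - Real.log (δ^2 - u^2))) (s / (δ^2 - s^2)) s := by
  have h1 : HasDerivAt (fun u : ℝ => δ^2 - u^2) (-(2*s)) s := by
    exact ((hasDerivAt_const s (δ^2)).sub (hasDerivAt_pow 2 s)).congr_deriv (by simp)
  have h3 := ((hasDerivAt_const s (Real.log (δ^2))).sub (h1.log hne)).const_mul (1/2 : ℝ)
  refine h3.congr_deriv ?_
  field_simp
  ring

lemma Vr_eq_pos (δa δb s : ℝ) (hb : δb ≠ 0) (hs : 0 < s) (hne : δb^2 - s^2 ≠ 0) :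
    Vr δa δb s = (1/2) * (Real.log (δb^2) - Real.log (δb^2 - s^2)) := by
  rw [Vr, if_pos hs, Real.log_div (pow_ne_zero 2 hb) hne]

lemma Vr_eq_neg (δa δb s : ℝ) (ha : δa ≠ 0) (hs : ¬ 0 < s) (hne : δa^2 - s^2 ≠ 0) :
    Vr δa δb s = (1/2) * (Real.log (δa^2) - Real.log (δa^2 - s^2)) := by
  rw [Vr, if_neg hs, Real.log_div (pow_ne_zero 2 ha) hne]

lemma hasDerivAt_Vr (δa δb e : ℝ) (ha : 0 < δa) (hb : 0 < δb)
    (h1 : -δa < e) (h2 : e < δb) :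
    HasDerivAt (Vr δa δb) (e * eta δa δb e) e := by
  rcases lt_trichotomy 0 e with hpos | hzero | hneg
  · have hne : δb^2 - e^2 ≠ 0 := by nlinarith
    have heq : ∀ᶠ s in nhds e, Vr δa δb s = (1/2) * (Real.log (δb^2) - Real.log (δb^2 - s^2)) := by
      filter_upwards [Ioo_mem_nhds hpos h2] with s hs
      exact Vr_eq_pos δa δb s hb.ne' hs.1 (by nlinarith [hs.1, hs.2])
    have h := (aux_deriv δb e hne).congr_of_eventuallyEq heq
    refine h.congr_deriv ?_
    rw [eta, if_pos hpos]; field_simp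
  · have hVr0 : Vr δa δb 0 = 0 := by
      rw [Vr, if_neg (lt_irrefl 0)]
      norm_num [div_self (pow_ne_zero 2 ha.ne'), Real.log_one]
    have hda : HasDerivWithinAt (Vr δa δb) ((0:ℝ)/(δa^2 - 0^2)) (Set.Ioc (-δa) 0) 0 := by
      refine ((aux_deriv δa 0 (by simpa using pow_ne_zero 2 ha.ne')).hasDerivWithinAt).congr ?_ ?_
      · intro s hs
        exact Vr_eq_neg δa δb s ha.ne' (not_lt.2 hs.2) (by nlinarith [hs.1, hs.2])
      · rw [Vr_eq_neg δa δb 0 ha.ne' (lt_irrefl 0) (by simpa using pow_ne_zero 2 ha.ne')]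
    have hdb : HasDerivWithinAt (Vr δa δb) ((0:ℝ)/(δb^2 - 0^2)) (Set.Ico 0 δb) 0 := by
      refine ((aux_deriv δb 0 (by simpa using pow_ne_zero 2 hb.ne')).hasDerivWithinAt).congr ?_ ?_
      · intro s hs
        rcases eq_or_lt_of_le hs.1 with h0 | h0
        · rw [← h0, hVr0]; simp
        · exact Vr_eq_pos δa δb s hb.ne' h0 (by nlinarith [hs.2])
      · rw [hVr0]; simp
    have h0 : ((0:ℝ)/(δa^2 - 0^2)) = ((0:ℝ)/(δb^2 - 0^2)) := by simp
    rw [h0] at hda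
    have hu := hda.union hdb
    rw [Set.Ioc_union_Ico_eq_Ioo (by linarith) hb] at hu
    have := hu.hasDerivAt (Ioo_mem_nhds (by linarith) hb)
    rw [← hzero]
    simpa using this
  · have hne : δa^2 - e^2 ≠ 0 := by nlinarith
    have heq : ∀ᶠ s in nhds e, Vr δa δb s = (1/2) * (Real.log (δa^2) - Real.log (δa^2 - s^2)) := by
      filter_upwards [Ioo_mem_nhds h1 hneg] with s hs
      exact Vr_eq_neg δa δb s ha.ne' (not_lt.2 hs.2.le) (by nlinarith [hs.1, hs.2])
    have h := (aux_deriv δa e hne).congr_of_eventuallyEq heq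
    refine h.congr_deriv ?_
    rw [eta, if_neg (not_lt.2 hneg.le)]; field_simp

lemma sq_le_of_Vr_le {δ e C : ℝ} (hδ : 0 < δ) (he2 : e^2 < δ^2)
    (h : (1/2) * Real.log (δ^2 / (δ^2 - e^2)) ≤ C) :
    e^2 ≤ δ^2 - δ^2 * Real.exp (-(2*C)) := by
  have hpos : 0 < δ^2 - e^2 := by nlinarith
  have hratio : 0 < δ^2 / (δ^2 - e^2) := by positivity
  have hlog : Real.log (δ^2 / (δ^2 - e^2)) ≤ 2*C := by linarith
  have hle : δ^2 / (δ^2 - e^2) ≤ Real.exp (2*C) := by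
    rw [← Real.exp_log hratio]
    exact Real.exp_le_exp.2 hlog
  have h1 : δ^2 ≤ Real.exp (2*C) * (δ^2 - e^2) := by
    rw [div_le_iff₀ hpos] at hle
    linarith [hle]
  have h2 : Real.exp (-(2*C)) * Real.exp (2*C) = 1 := by
    rw [← Real.exp_add]; simp
  nlinarith [mul_le_mul_of_nonneg_left h1 (Real.exp_pos (-(2*C))).le, Real.exp_pos (-(2*C))]

lemma Vr_of_pos {δa δb e : ℝ} (h : 0 < e) :
    Vr δa δb e = (1 / 2) * Real.log (δb ^ 2 / (δb ^ 2 - e ^ 2)) := if_pos h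

lemma Vr_of_nonpos {δa δb e : ℝ} (h : ¬ 0 < e) :
    Vr δa δb e = (1 / 2) * Real.log (δa ^ 2 / (δa ^ 2 - e ^ 2)) := if_neg h

lemma safety_core (r ex ey Ω : ℝ → ℝ) (v d k1 k2 ri ro : ℝ)
    (hΩpos : ∀ s : ℝ, s ≠ 0 → 0 < s * Ω s)
    (hri : 0 < ri) (hrid : ri < d) (hdro : d < ro) (hk1 : 0 < k1) (hk2 : 0 < k2)
    (hrex : ∀ s : ℝ, |ex s| ≤ r s) (hrey : ∀ s : ℝ, |ey s - d| ≤ r s)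
    (hrcont : ∀ s : ℝ, 0 ≤ s → ContinuousAt r s)
    (hderivs : ∀ s : ℝ, 0 ≤ s → r s ∈ Set.Ioo ri ro →
      HasDerivAt r (v * ex s / r s) s ∧
      HasDerivAt ey (-(v / d + v * k1 * Ω (v * ex s) +
        v * k2 * ((r s - d) / r s) * eta (d - ri) (ro - d) (r s - d)) * ex s) s)
    (hr0 : r 0 ∈ Set.Ioo ri ro) :
    ∀ t : ℝ, 0 ≤ t → ri < r t ∧ r t < ro := by
  intro t₀ ht₀
  by_contra hcon
  have hnot : r t₀ ∉ Set.Ioo ri ro := fun hmem => hcon ⟨hmem.1, hmem.2⟩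
  have hd : 0 < d := lt_trans hri hrid
  have hδa : 0 < d - ri := by linarith
  have hδb : 0 < ro - d := by linarith
  have hro : 0 < ro := by linarith
  obtain ⟨M, hMdef⟩ : ∃ M : ℝ, M = |v| * ro / (d * k2) := ⟨_, rfl⟩
  have hM : 0 ≤ M := by rw [hMdef]; positivity
  -- the first exit time
  obtain ⟨S, hSdef⟩ : ∃ S : Set ℝ, S = {u | u ∈ Set.Icc 0 t₀ ∧ r u ∉ Set.Ioo ri ro} := ⟨_, rfl⟩
  have hSmem : ∀ u : ℝ, u ∈ S ↔ (0 ≤ u ∧ u ≤ t₀) ∧ r u ∉ Set.Ioo ri ro := by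
    intro u; rw [hSdef]; exact Iff.rfl
  have hSne : S.Nonempty := ⟨t₀, (hSmem t₀).2 ⟨⟨ht₀, le_refl t₀⟩, hnot⟩⟩
  have hSbdd : BddBelow S := ⟨0, fun u hu => ((hSmem u).1 hu).1.1⟩
  have hSclosed : IsClosed S := by
    have h1 : S = Set.Icc 0 t₀ ∩ r ⁻¹' (Set.Ioo ri ro)ᶜ := by
      rw [hSdef]; ext u; simp [Set.mem_Icc]
    rw [h1]
    exact ContinuousOn.preimage_isClosed_of_isClosed
      (fun u hu => (hrcont u hu.1).continuousWithinAt) isClosed_Icc isOpen_Ioo.isClosed_compl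
  obtain ⟨τ, hτdef⟩ : ∃ τ : ℝ, τ = sInf S := ⟨_, rfl⟩
  have hτS : τ ∈ S := hτdef ▸ hSclosed.csInf_mem hSne hSbdd
  have hτS' := (hSmem τ).1 hτS
  have hτ0 : 0 ≤ τ := hτS'.1.1
  have hτt₀ : τ ≤ t₀ := hτS'.1.2
  have hτpos : 0 < τ := by
    rcases eq_or_lt_of_le hτ0 with h | h
    · exact absurd (show r τ ∈ Set.Ioo ri ro by rw [← h]; exact hr0) hτS'.2
    · exact h
  have hgood : ∀ u : ℝ, 0 ≤ u → u < τ → r u ∈ Set.Ioo ri ro := by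
    intro u hu0 huτ
    by_contra hbad
    have : τ ≤ u := hτdef ▸ csInf_le hSbdd ((hSmem u).2 ⟨⟨hu0, le_trans huτ.le hτt₀⟩, hbad⟩)
    exact absurd this (not_le.2 huτ)
  -- the Lyapunov-like function
  obtain ⟨g, hgdef⟩ : ∃ g : ℝ → ℝ,
      g = fun w => Vr (d - ri) (ro - d) (r w - d) + ey w / k2 - M * w := ⟨_, rfl⟩
  have hgderiv : ∀ u : ℝ, 0 ≤ u → r u ∈ Set.Ioo ri ro →
      HasDerivAt g (-(v * ex u) / (d * k2) - (k1 / k2) * ((v * ex u) * Ω (v * ex u)) - M) u := by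
    intro u hu hmem
    obtain ⟨hrd, heyd⟩ := hderivs u hu hmem
    have hrupos : 0 < r u := lt_trans hri hmem.1
    have hVd : HasDerivAt (fun w => Vr (d - ri) (ro - d) (r w - d))
        (((r u - d) * eta (d - ri) (ro - d) (r u - d)) * (v * ex u / r u)) u :=
      by have := (hasDerivAt_Vr (d - ri) (ro - d) (r u - d) hδa hδb (by linarith [hmem.1])
        (by linarith [hmem.2])).comp u (hrd.sub_const d); exact this
    have h := (hVd.add (heyd.div_const k2)).sub ((hasDerivAt_id u).const_mul M)
    rw [hgdef]
    refine h.congr_deriv ?_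
    field_simp
    ring
  have hgnonpos : ∀ u : ℝ, 0 ≤ u → r u ∈ Set.Ioo ri ro →
      -(v * ex u) / (d * k2) - (k1 / k2) * ((v * ex u) * Ω (v * ex u)) - M ≤ 0 := by
    intro u hu hmem
    have hΩnn : 0 ≤ (v * ex u) * Ω (v * ex u) := by
      rcases eq_or_ne (v * ex u) 0 with h | h
      · rw [h, zero_mul]
      · exact (hΩpos _ h).le
    have habs : -(v * ex u) ≤ |v| * ro := by
      calc -(v * ex u) ≤ |v * ex u| := neg_le_abs _
        _ = |v| * |ex u| := abs_mul v (ex u)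
        _ ≤ |v| * ro := by
            apply mul_le_mul_of_nonneg_left _ (abs_nonneg v)
            exact le_trans (hrex u) (le_of_lt hmem.2)
    have h1 : -(v * ex u) / (d * k2) ≤ M := by
      rw [hMdef]
      exact div_le_div_of_nonneg_right habs (by positivity)
    have h2 : 0 ≤ (k1 / k2) * ((v * ex u) * Ω (v * ex u)) :=
      mul_nonneg (by positivity) hΩnn
    linarith
  -- the constant bound on Vr along the trajectory
  obtain ⟨C, hCdef⟩ : ∃ C : ℝ,
      C = Vr (d - ri) (ro - d) (r 0 - d) + 2 * ro / k2 + M * t₀ := ⟨_, rfl⟩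
  have hVle : ∀ u : ℝ, 0 ≤ u → u < τ → Vr (d - ri) (ro - d) (r u - d) ≤ C := by
    intro u hu0 huτ
    have hgu : g u ≤ g 0 := by
      rcases eq_or_lt_of_le hu0 with h | h
      · rw [← h]
      · have hanti : AntitoneOn g (Set.Icc 0 u) := by
          apply antitoneOn_of_deriv_nonpos (convex_Icc 0 u)
          · intro w hw
            exact (hgderiv w hw.1 (hgood w hw.1
              (lt_of_le_of_lt hw.2 huτ))).continuousAt.continuousWithinAt
          · intro w hw
            rw [interior_Icc] at hw
            exact (hgderiv w hw.1.le (hgood w hw.1.le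
              (lt_trans hw.2 huτ))).differentiableAt.differentiableWithinAt
          · intro w hw
            rw [interior_Icc] at hw
            have hwτ : w < τ := lt_trans hw.2 huτ
            rw [(hgderiv w hw.1.le (hgood w hw.1.le hwτ)).deriv]
            exact hgnonpos w hw.1.le (hgood w hw.1.le hwτ)
        exact hanti (Set.left_mem_Icc.2 hu0) ⟨hu0, le_refl u⟩ hu0
    have hey0 : ey 0 ≤ d + ro := by
      have := (abs_le.1 (hrey 0)).2
      linarith [hr0.2]
    have heyu : d - ro ≤ ey u := by
      have := (abs_le.1 (hrey u)).1
      linarith [(hgood u hu0 huτ).2]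
    have hMu : M * u ≤ M * t₀ := mul_le_mul_of_nonneg_left (by linarith) hM
    have hdiv1 : ey 0 / k2 ≤ (d + ro) / k2 := div_le_div_of_nonneg_right hey0 hk2.le
    have hdiv2 : (d - ro) / k2 ≤ ey u / k2 := div_le_div_of_nonneg_right heyu hk2.le
    have hexpand : Vr (d - ri) (ro - d) (r u - d) = g u - ey u / k2 + M * u := by
      rw [hgdef]; ring
    have hg0 : g 0 = Vr (d - ri) (ro - d) (r 0 - d) + ey 0 / k2 := by
      rw [hgdef]; ring
    have h2ro : (d + ro) / k2 - (d - ro) / k2 = 2 * ro / k2 := by ring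
    rw [hexpand, hCdef]
    linarith
  -- uniform interior bounds
  obtain ⟨A, hAdef⟩ : ∃ A : ℝ,
      A = Real.sqrt ((d - ri)^2 - (d - ri)^2 * Real.exp (-(2*C))) := ⟨_, rfl⟩
  obtain ⟨B, hBdef⟩ : ∃ B : ℝ,
      B = Real.sqrt ((ro - d)^2 - (ro - d)^2 * Real.exp (-(2*C))) := ⟨_, rfl⟩
  have hAnn : 0 ≤ A := hAdef ▸ Real.sqrt_nonneg _
  have hBnn : 0 ≤ B := hBdef ▸ Real.sqrt_nonneg _
  have hAlt : A < d - ri := by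
    rw [hAdef]
    exact (Real.sqrt_lt' hδa).2 (by linarith [mul_pos (pow_pos hδa 2) (Real.exp_pos (-(2*C)))])
  have hBlt : B < ro - d := by
    rw [hBdef]
    exact (Real.sqrt_lt' hδb).2 (by linarith [mul_pos (pow_pos hδb 2) (Real.exp_pos (-(2*C)))])
  have hbound : ∀ u : ℝ, 0 ≤ u → u < τ → d - A ≤ r u ∧ r u ≤ d + B := by
    intro u hu0 huτ
    have hmem := hgood u hu0 huτ
    have hV := hVle u hu0 huτ
    by_cases hepos : 0 < r u - d
    · have he2 : (r u - d)^2 < (ro - d)^2 := sq_lt_sq' (by linarith [hmem.1, hmem.2]) (by linarith [hmem.2])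
      rw [Vr_of_pos hepos] at hV
      have hsq := sq_le_of_Vr_le hδb he2 hV
      have habs : |r u - d| ≤ B := by
        rw [hBdef]
        calc |r u - d| = Real.sqrt ((r u - d)^2) := (Real.sqrt_sq_eq_abs _).symm
          _ ≤ _ := Real.sqrt_le_sqrt hsq
      constructor
      · linarith [hAnn]
      · linarith [(abs_le.1 habs).2]
    · have he2 : (r u - d)^2 < (d - ri)^2 := by
        push_neg at hepos
        nlinarith [hmem.1]
      rw [Vr_of_nonpos hepos] at hV
      have hsq := sq_le_of_Vr_le hδa he2 hV
      have habs : |r u - d| ≤ A := by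
        rw [hAdef]
        calc |r u - d| = Real.sqrt ((r u - d)^2) := (Real.sqrt_sq_eq_abs _).symm
          _ ≤ _ := Real.sqrt_le_sqrt hsq
      constructor
      · linarith [(abs_le.1 habs).1]
      · linarith [hBnn]
  -- limit at τ
  have htends : Filter.Tendsto r (nhdsWithin τ (Set.Iio τ)) (nhds (r τ)) :=
    ((hrcont τ hτ0).tendsto).mono_left nhdsWithin_le_nhds
  have hIoo : Set.Ioo 0 τ ∈ nhdsWithin τ (Set.Iio τ) :=
    Ioo_mem_nhdsLT_of_mem ⟨hτpos, le_refl τ⟩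
  have hub : r τ ≤ d + B :=
    le_of_tendsto htends (Filter.eventually_of_mem hIoo fun u hu => (hbound u hu.1.le hu.2).2)
  have hlb : d - A ≤ r τ :=
    ge_of_tendsto htends (Filter.eventually_of_mem hIoo fun u hu => (hbound u hu.1.le hu.2).1)
  exact hτS'.2 ⟨by linarith, by linarith⟩

/-- Theorem 1, safety part: Under the closed-loop dynamics with the range
and range-rate based controller, if r(0) ∈ (r_i, r_o), then r_i < r(t) < r_o for all t ≥ 0. -/
theorem theorem1_safety
    (x y θ : ℝ → ℝ) (Ω : ℝ → ℝ) (v d k1 k2 ri ro xT yT : ℝ)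
    (hΩcont : Continuous Ω) (hΩ0 : Ω 0 = 0) (hΩpos : ∀ s : ℝ, s ≠ 0 → 0 < s * Ω s)
    (hv : v ≠ 0) (hri : 0 < ri) (hrid : ri < d) (hdro : d < ro)
    (hk1 : 0 < k1) (hk2 : 0 < k2)
    (hxdiff : ∀ t ≥ (0 : ℝ), DifferentiableAt ℝ x t)
    (hydiff : ∀ t ≥ (0 : ℝ), DifferentiableAt ℝ y t)
    (hθdiff : ∀ t ≥ (0 : ℝ), DifferentiableAt ℝ θ t)
    (hclosedloop : ∀ t ≥ (0 : ℝ), rng x y xT yT t ∈ Set.Ioo ri ro →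
      HasDerivAt x (v * Real.cos (θ t)) t ∧
      HasDerivAt y (v * Real.sin (θ t)) t ∧
      HasDerivAt θ (v / d + v * k1 * Ω (v * ebx x y θ xT yT t) +
        v * k2 * ((rng x y xT yT t - d) / rng x y xT yT t) *
          eta (d - ri) (ro - d) (rng x y xT yT t - d)) t)
    (hr0 : rng x y xT yT 0 ∈ Set.Ioo ri ro) :
    ∀ t ≥ (0 : ℝ), ri < rng x y xT yT t ∧ rng x y xT yT t < ro := by
  have hrsq : ∀ s : ℝ, (rng x y xT yT s) ^ 2 = (x s - xT)^2 + (y s - yT)^2 := by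
    intro s
    rw [rng]
    exact Real.sq_sqrt (by positivity)
  have hrnn : ∀ s : ℝ, 0 ≤ rng x y xT yT s := fun s => Real.sqrt_nonneg _
  have hrex : ∀ s : ℝ, |ebx x y θ xT yT s| ≤ rng x y xT yT s := by
    intro s
    have hsq : (ebx x y θ xT yT s)^2 ≤ (rng x y xT yT s)^2 := by
      rw [hrsq, ebx]
      nlinarith [sq_nonneg ((x s - xT) * Real.sin (θ s) - (y s - yT) * Real.cos (θ s)),
        Real.sin_sq_add_cos_sq (θ s)]
    calc |ebx x y θ xT yT s| = Real.sqrt ((ebx x y θ xT yT s)^2) := (Real.sqrt_sq_eq_abs _).symm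
      _ ≤ Real.sqrt ((rng x y xT yT s)^2) := Real.sqrt_le_sqrt hsq
      _ = rng x y xT yT s := Real.sqrt_sq (hrnn s)
  have hrey : ∀ s : ℝ, |eby x y θ xT yT d s - d| ≤ rng x y xT yT s := by
    intro s
    have hsq : (eby x y θ xT yT d s - d)^2 ≤ (rng x y xT yT s)^2 := by
      rw [hrsq, eby]
      nlinarith [sq_nonneg ((x s - xT) * Real.cos (θ s) + (y s - yT) * Real.sin (θ s)),
        Real.sin_sq_add_cos_sq (θ s)]
    calc |eby x y θ xT yT d s - d| = Real.sqrt ((eby x y θ xT yT d s - d)^2) :=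
        (Real.sqrt_sq_eq_abs _).symm
      _ ≤ Real.sqrt ((rng x y xT yT s)^2) := Real.sqrt_le_sqrt hsq
      _ = rng x y xT yT s := Real.sqrt_sq (hrnn s)
  have hrcont : ∀ s : ℝ, 0 ≤ s → ContinuousAt (rng x y xT yT) s := by
    intro s hs
    have h1 : ContinuousAt (fun u => (x u - xT)^2 + (y u - yT)^2) s :=
      ((((hxdiff s hs).continuousAt).sub continuousAt_const).pow 2).add
        ((((hydiff s hs).continuousAt).sub continuousAt_const).pow 2)
    exact Real.continuous_sqrt.continuousAt.comp h1
  have hderivs : ∀ s : ℝ, 0 ≤ s → rng x y xT yT s ∈ Set.Ioo ri ro →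
      HasDerivAt (rng x y xT yT) (v * ebx x y θ xT yT s / rng x y xT yT s) s ∧
      HasDerivAt (eby x y θ xT yT d) (-(v / d + v * k1 * Ω (v * ebx x y θ xT yT s) +
        v * k2 * ((rng x y xT yT s - d) / rng x y xT yT s) *
          eta (d - ri) (ro - d) (rng x y xT yT s - d)) * ebx x y θ xT yT s) s := by
    intro s hs hmem
    obtain ⟨hx', hy', hθ'⟩ := hclosedloop s hs hmem
    have hrpos : 0 < rng x y xT yT s := lt_trans hri hmem.1
    have hqpos : 0 < (x s - xT)^2 + (y s - yT)^2 := by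
      have := hrsq s
      nlinarith [hrpos]
    constructor
    · have hq : HasDerivAt (fun w => (x w - xT)^2 + (y w - yT)^2)
          (2*(x s - xT)*(v * Real.cos (θ s)) + 2*(y s - yT)*(v * Real.sin (θ s))) s := by
        have h1 := (hx'.sub_const xT).pow 2
        have h2 := (hy'.sub_const yT).pow 2
        refine (h1.add h2).congr_deriv ?_
        ring
      have h := hq.sqrt hqpos.ne'
      have hfun : rng x y xT yT = fun w => Real.sqrt ((x w - xT)^2 + (y w - yT)^2) := rfl
      rw [hfun]
      convert h using 1
      have hru : Real.sqrt ((x s - xT)^2 + (y s - yT)^2) = rng x y xT yT s := rfl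
      have hQne : Real.sqrt ((x s - xT)^2 + (y s - yT)^2) ≠ 0 := by
        rw [hru]; exact hrpos.ne'
      simp only [ebx]
      field_simp
    · have h1 : HasDerivAt (fun w => -(x w - xT)) (-(v * Real.cos (θ s))) s :=
        (hx'.sub_const xT).neg
      have hsin : HasDerivAt (fun w => Real.sin (θ w)) (Real.cos (θ s) * _) s :=
        (Real.hasDerivAt_sin (θ s)).comp s hθ'
      have hcos : HasDerivAt (fun w => Real.cos (θ w)) (-Real.sin (θ s) * _) s :=
        (Real.hasDerivAt_cos (θ s)).comp s hθ'
      have h2 := h1.mul hsin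
      have h3 := (hy'.sub_const yT).mul hcos
      have h4 := (h2.add h3).add_const d
      have hfun : eby x y θ xT yT d =
          fun w => (-(x w - xT) * Real.sin (θ w) + (y w - yT) * Real.cos (θ w)) + d := rfl
      rw [hfun]
      refine h4.congr_deriv ?_
      rw [ebx]
      ring
  intro t ht
  exact safety_core (rng x y xT yT) (ebx x y θ xT yT) (eby x y θ xT yT d) Ω v d k1 k2 ri ro
    hΩpos hri hrid hdro hk1 hk2 hrex hrey hrcont hderivs hr0 t ht
end

section
/- (Theorem 4(a),(b).) Under the hypotheses of Theorem 2 (closed-loop unicycle dynamics with the range-only controller ω = v/d + v·k₁·Ω(β) + v·k₂·((r − d)/r)·η(r − d), auxiliary state ż = −κ·z + (1/2)·r², β = −κ·z + (1/2)·r², v ≠ 0 constant, k₁, k₂, κ > 0, r(0) ∈ (r_i, r_o)), set V₂(0) = (1/2)(ē_x(0)² + ē_y(0)²) + d·k₂·V_r(r(0) − d) + d·k₁·∫₀^{β(0)} Ω(τ) dτ and Υ₂ = √(1 − exp(−2·V₂(0)/(d·k₂))). Then for all t ≥ 0: ē_x(t)² + ē_y(t)² ≤ 2·V₂(0), −δ_a·Υ₂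 ≤ r(t) − d ≤ δ_b·Υ₂, and r_i + δ_a·(1 − Υ₂) ≤ r(t) ≤ r_o − δ_b·(1 − Υ₂). -/
/-- The estimation signal β(t) = −κ·z(t) + (1/2)·r(t)². -/
noncomputable def beta (x y : ℝ → ℝ) (z : ℝ → ℝ) (κ xT yT : ℝ) (t : ℝ) : ℝ :=
  -κ * z t + (1 / 2) * (rng x y xT yT t) ^ 2

/-- derivative of the smooth branch -/
lemma branch_hasDerivAt (δ e : ℝ) (h : δ ^ 2 - e ^ 2 ≠ 0) :
    HasDerivAt (fun u : ℝ => (1 / 2) * (Real.log (δ ^ 2) - Real.log (δ ^ 2 - u ^ 2)))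
      (e / (δ ^ 2 - e ^ 2)) e := by
  have h1 : HasDerivAt (fun u : ℝ => δ ^ 2 - u ^ 2) (-(2 * e)) e := by
    simpa using ((hasDerivAt_pow 2 e).const_sub (δ ^ 2))
  have h2 := (Real.hasDerivAt_log h).comp e h1
  have h3 := ((hasDerivAt_const e (Real.log (δ ^ 2))).sub h2).const_mul (1 / 2 : ℝ)
  convert h3 using 1
  any_goals rfl
  field_simp
  ring

lemma branch_eq (δ e : ℝ) (h : 0 < δ ^ 2 - e ^ 2) (hδ : 0 < δ) :
    (1 / 2) * (Real.log (δ ^ 2) - Real.log (δ ^ 2 - e ^ 2))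
      = (1 / 2) * Real.log (δ ^ 2 / (δ ^ 2 - e ^ 2)) := by
  rw [Real.log_div (by positivity) (ne_of_gt h)]

lemma Vr_hasDerivAt (δa δb : ℝ) (ha : 0 < δa) (hb : 0 < δb) (e : ℝ)
    (hea : -δa < e) (heb : e < δb) :
    HasDerivAt (Vr δa δb) (e * eta δa δb e) e := by
  have hb2 : ∀ u, -δb < u → u < δb → 0 < δb ^ 2 - u ^ 2 := by
    intro u h1 h2; nlinarith
  have ha2 : ∀ u, -δa < u → u < δa → 0 < δa ^ 2 - u ^ 2 := by
    intro u h1 h2; nlinarith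
  rcases lt_trichotomy e 0 with hneg | hzero | hpos
  · -- e < 0 : Vr agrees with the δa-branch near e
    have hpos2 : 0 < δa ^ 2 - e ^ 2 := ha2 e hea (by linarith)
    have h1 := branch_hasDerivAt δa e (ne_of_gt hpos2)
    have heq : (fun u : ℝ => (1 / 2) * (Real.log (δa ^ 2) - Real.log (δa ^ 2 - u ^ 2)))
        =ᶠ[nhds e] Vr δa δb := by
      have hs : Set.Ioo (-δa) (0 : ℝ) ∈ nhds e := Ioo_mem_nhds hea hneg
      filter_upwards [hs] with u hu
      have := ha2 u hu.1 (lt_trans hu.2 ha)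
      rw [Vr, if_neg (not_lt.mpr (le_of_lt hu.2)), branch_eq δa u this ha]
    have h2 := h1.congr_of_eventuallyEq heq.symm
    convert h2 using 1
    any_goals rfl
    rw [eta, if_neg (not_lt.mpr (le_of_lt hneg))]
    field_simp
  · -- e = 0 : glue the two branches
    subst hzero
    have hbd : 0 < δb ^ 2 - (0:ℝ) ^ 2 := by simpa using hb2 0 (by linarith) hb
    have had : 0 < δa ^ 2 - (0:ℝ) ^ 2 := by simpa using ha2 0 (by linarith) ha
    have h1 := branch_hasDerivAt δb 0 (ne_of_gt hbd)
    have h2 := branch_hasDerivAt δa 0 (ne_of_gt had)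
    have h1' : HasDerivWithinAt (Vr δa δb) ((0:ℝ) / (δb ^ 2 - 0 ^ 2)) (Set.Ico 0 δb) 0 := by
      refine (h1.hasDerivWithinAt).congr ?_ ?_
      · intro u hu
        rcases eq_or_lt_of_le hu.1 with h | h
        · subst h
          simp [Vr, div_self (ne_of_gt (by positivity : (0:ℝ) < δa ^ 2))]
        · rw [Vr, if_pos h, ← branch_eq δb u (hb2 u (by linarith) hu.2) hb]
      · simp [Vr, div_self (ne_of_gt (by positivity : (0:ℝ) < δa ^ 2))]
    have h2' : HasDerivWithinAt (Vr δa δb) ((0:ℝ) / (δb ^ 2 - 0 ^ 2)) (Set.Ioc (-δa) 0) 0 := by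
      have : ((0:ℝ) / (δb ^ 2 - 0 ^ 2)) = ((0:ℝ) / (δa ^ 2 - 0 ^ 2)) := by simp
      rw [this]
      refine (h2.hasDerivWithinAt).congr ?_ ?_
      · intro u hu
        rw [Vr, if_neg (not_lt.mpr hu.2), ← branch_eq δa u (ha2 u hu.1 (lt_of_le_of_lt hu.2 ha)) ha]
      · rw [Vr, if_neg (lt_irrefl 0)]
        rw [← branch_eq δa 0 had ha]
    have h3 := h2'.union h1'
    have hmem : Set.Ioc (-δa) 0 ∪ Set.Ico 0 δb ∈ nhds (0:ℝ) := by
      have : Set.Ioo (-δa) δb ⊆ Set.Ioc (-δa) 0 ∪ Set.Ico 0 δb := by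
        intro u hu
        rcases le_or_gt u 0 with h | h
        · exact Or.inl ⟨hu.1, h⟩
        · exact Or.inr ⟨le_of_lt h, hu.2⟩
      exact Filter.mem_of_superset (Ioo_mem_nhds (by linarith) hb) this
    have h4 := h3.hasDerivAt hmem
    convert h4 using 1
    any_goals rfl
    simp
  · -- 0 < e
    have hpos2 : 0 < δb ^ 2 - e ^ 2 := hb2 e (by linarith) heb
    have h1 := branch_hasDerivAt δb e (ne_of_gt hpos2)
    have heq : (fun u : ℝ => (1 / 2) * (Real.log (δb ^ 2) - Real.log (δb ^ 2 - u ^ 2)))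
        =ᶠ[nhds e] Vr δa δb := by
      have hs : Set.Ioo (0:ℝ) δb ∈ nhds e := Ioo_mem_nhds hpos heb
      filter_upwards [hs] with u hu
      rw [Vr, if_pos hu.1, branch_eq δb u (hb2 u (by linarith [hu.1]) hu.2) hb]
    have h2 := h1.congr_of_eventuallyEq heq.symm
    convert h2 using 1
    any_goals rfl
    rw [eta, if_pos hpos]
    field_simp

lemma Vr_nonneg (δa δb : ℝ) (ha : 0 < δa) (hb : 0 < δb) (e : ℝ)
    (hea : -δa < e) (heb : e < δb) : 0 ≤ Vr δa δb e := by
  rw [Vr]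
  split_ifs with h
  · have h1 : 0 < δb ^ 2 - e ^ 2 := by nlinarith
    have h2 : (1:ℝ) ≤ δb ^ 2 / (δb ^ 2 - e ^ 2) := by
      rw [le_div_iff₀ h1]; nlinarith
    have := Real.log_nonneg h2
    linarith
  · have h1 : 0 < δa ^ 2 - e ^ 2 := by push_neg at h; nlinarith
    have h2 : (1:ℝ) ≤ δa ^ 2 / (δa ^ 2 - e ^ 2) := by
      rw [le_div_iff₀ h1]; nlinarith
    have := Real.log_nonneg h2
    linarith

/-- From a barrier bound recover the state bound. -/
lemma Vr_bound (δa δb : ℝ) (ha : 0 < δa) (hb : 0 < δb) (e M : ℝ)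
    (hea : -δa < e) (heb : e < δb) (hM : Vr δa δb e ≤ M) :
    -δa * Real.sqrt (1 - Real.exp (-(2 * M))) ≤ e ∧
      e ≤ δb * Real.sqrt (1 - Real.exp (-(2 * M))) := by
  have hMnn : 0 ≤ M := le_trans (Vr_nonneg δa δb ha hb e hea heb) hM
  set Υ := Real.sqrt (1 - Real.exp (-(2 * M))) with hΥ
  have hΥnn : 0 ≤ Υ := Real.sqrt_nonneg _
  have key : ∀ δ : ℝ, 0 < δ → 0 < δ ^ 2 - e ^ 2 →
      (1 / 2) * Real.log (δ ^ 2 / (δ ^ 2 - e ^ 2)) ≤ M → e ^ 2 ≤ (δ * Υ) ^ 2 := by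
    intro δ hδ h1 h2
    have hq : 0 < δ ^ 2 / (δ ^ 2 - e ^ 2) := by positivity
    have h3 : Real.log (δ ^ 2 / (δ ^ 2 - e ^ 2)) ≤ 2 * M := by linarith
    have h4 : δ ^ 2 / (δ ^ 2 - e ^ 2) ≤ Real.exp (2 * M) := by
      calc δ ^ 2 / (δ ^ 2 - e ^ 2) = Real.exp (Real.log (δ ^ 2 / (δ ^ 2 - e ^ 2))) :=
            (Real.exp_log hq).symm
        _ ≤ Real.exp (2 * M) := Real.exp_le_exp.mpr h3
    have hexp : 0 < Real.exp (2 * M) := Real.exp_pos _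
    have h5 : δ ^ 2 ≤ Real.exp (2 * M) * (δ ^ 2 - e ^ 2) := by
      rw [div_le_iff₀ h1] at h4; linarith
    have h6 : e ^ 2 ≤ δ ^ 2 * (1 - Real.exp (-(2 * M))) := by
      have hie : Real.exp (-(2 * M)) = (Real.exp (2 * M))⁻¹ := by
        rw [Real.exp_neg]
      rw [hie]
      have := mul_le_mul_of_nonneg_left h5 (le_of_lt (inv_pos.mpr hexp))
      have hx : (Real.exp (2*M))⁻¹ * (Real.exp (2*M) * (δ^2 - e^2)) = δ^2 - e^2 := by
        field_simp
      rw [hx] at this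
      nlinarith [inv_pos.mpr hexp]
    have harg : (0:ℝ) ≤ 1 - Real.exp (-(2*M)) := by
      have := Real.exp_le_one_iff.mpr (by linarith : -(2*M) ≤ 0)
      linarith
    have hΥsq : Υ ^ 2 = 1 - Real.exp (-(2 * M)) := Real.sq_sqrt harg
    calc e ^ 2 ≤ δ ^ 2 * (1 - Real.exp (-(2 * M))) := h6
      _ = (δ * Υ) ^ 2 := by rw [mul_pow, hΥsq]
  rw [Vr] at hM
  split_ifs at hM with h
  · have h1 : 0 < δb ^ 2 - e ^ 2 := by nlinarith
    have h2 := key δb hb h1 hM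
    constructor
    · nlinarith [mul_nonneg ha.le hΥnn]
    · nlinarith [mul_nonneg hb.le hΥnn]
  · push_neg at h
    have h1 : 0 < δa ^ 2 - e ^ 2 := by nlinarith
    have h2 := key δa ha h1 hM
    constructor
    · nlinarith [mul_nonneg ha.le hΥnn]
    · nlinarith [mul_nonneg hb.le hΥnn]

lemma integral_Omega_nonneg (Ω : ℝ → ℝ) (hΩcont : Continuous Ω) (hΩ0 : Ω 0 = 0)
    (hΩpos : ∀ s : ℝ, s ≠ 0 → 0 < s * Ω s) (b : ℝ) :
    0 ≤ ∫ τ in (0:ℝ)..b, Ω τ := by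
  have hsign : ∀ s : ℝ, 0 ≤ s → 0 ≤ Ω s := by
    intro s hs
    rcases eq_or_lt_of_le hs with h | h
    · rw [← h, hΩ0]
    · nlinarith [hΩpos s (ne_of_gt h)]
  have hsign' : ∀ s : ℝ, s ≤ 0 → Ω s ≤ 0 := by
    intro s hs
    rcases eq_or_lt_of_le hs with h | h
    · rw [h, hΩ0]
    · nlinarith [hΩpos s (ne_of_lt h)]
  rcases le_or_gt 0 b with hb | hb
  · apply intervalIntegral.integral_nonneg hb
    intro u hu; exact hsign u hu.1
  · rw [intervalIntegral.integral_symm b 0]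
    have h1 : 0 ≤ ∫ τ in b..(0:ℝ), -Ω τ :=
      intervalIntegral.integral_nonneg hb.le (fun u hu => neg_nonneg.mpr (hsign' u hu.2))
    rw [intervalIntegral.integral_neg] at h1
    linarith

lemma V_hasDerivAt
    (x y θ z : ℝ → ℝ) (Ω : ℝ → ℝ) (v d k1 k2 κ ri ro xT yT : ℝ)
    (hΩcont : Continuous Ω)
    (hri : 0 < ri) (hrid : ri < d) (hdro : d < ro)
    (t : ℝ) (ht : 0 ≤ t) (hgood : rng x y xT yT t ∈ Set.Ioo ri ro)
    (hx : HasDerivAt x (v * Real.cos (θ t)) t)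
    (hy : HasDerivAt y (v * Real.sin (θ t)) t)
    (hz : HasDerivAt z (-κ * z t + (1 / 2) * (rng x y xT yT t) ^ 2) t)
    (hθ : HasDerivAt θ (v / d + v * k1 * Ω (beta x y z κ xT yT t) +
        v * k2 * ((rng x y xT yT t - d) / rng x y xT yT t) *
          eta (d - ri) (ro - d) (rng x y xT yT t - d)) t) :
    HasDerivAt (fun s => (1 / 2) * ((ebx x y θ xT yT s) ^ 2 + (eby x y θ xT yT d s) ^ 2) +
        d * k2 * Vr (d - ri) (ro - d) (rng x y xT yT s - d) +
        d * k1 * ∫ τ in (0:ℝ)..(beta x y z κ xT yT s), Ω τ)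
      (-(d * k1 * κ * (beta x y z κ xT yT t) * Ω (beta x y z κ xT yT t))) t := by
  have hd : 0 < d := lt_trans hri hrid
  set ω : ℝ := v / d + v * k1 * Ω (beta x y z κ xT yT t) +
      v * k2 * ((rng x y xT yT t - d) / rng x y xT yT t) *
        eta (d - ri) (ro - d) (rng x y xT yT t - d) with hωdef
  set R := rng x y xT yT t with hR
  have hRpos : 0 < R := lt_trans hri hgood.1
  have hqpos : 0 < (x t - xT) ^ 2 + (y t - yT) ^ 2 := by
    have : R = Real.sqrt ((x t - xT) ^ 2 + (y t - yT) ^ 2) := rfl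
    exact Real.sqrt_pos.mp (this ▸ hRpos)
  -- derivative of rng
  have hr : HasDerivAt (rng x y xT yT) (v * ebx x y θ xT yT t / R) t := by
    have hq : HasDerivAt (fun s => (x s - xT) ^ 2 + (y s - yT) ^ 2)
        (2 * (x t - xT) ^ 1 * (v * Real.cos (θ t)) + 2 * (y t - yT) ^ 1 * (v * Real.sin (θ t))) t := by
      exact_mod_cast ((hx.sub_const xT).pow 2).add ((hy.sub_const yT).pow 2)
    have := hq.sqrt (ne_of_gt hqpos)
    have hRR : Real.sqrt ((x t - xT) ^ 2 + (y t - yT) ^ 2) = R := rfl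
    rw [hRR] at this
    convert this using 1
    any_goals rfl
    rw [ebx]
    field_simp
  -- derivative of ebx
  have hcos : HasDerivAt (fun s => Real.cos (θ s)) (-Real.sin (θ t) * ω) t := hθ.cos
  have hsin : HasDerivAt (fun s => Real.sin (θ s)) (Real.cos (θ t) * ω) t := hθ.sin
  have hebx : HasDerivAt (ebx x y θ xT yT) (v + ω * (eby x y θ xT yT d t - d)) t := by
    have h1 := ((hx.sub_const xT).mul hcos).add ((hy.sub_const yT).mul hsin)
    convert h1 using 1
    any_goals rfl
    rw [eby]
    linear_combination (-v) * Real.sin_sq_add_cos_sq (θ t)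
  have heby : HasDerivAt (eby x y θ xT yT d) (-(ω * ebx x y θ xT yT t)) t := by
    have h1 := ((((hx.sub_const xT).neg).mul hsin).add ((hy.sub_const yT).mul hcos)).add_const d
    convert h1 using 1
    any_goals rfl
    rw [ebx]
    simp only [Pi.neg_apply]
    ring
  -- derivative of the barrier term
  have hVrt : HasDerivAt (fun s => Vr (d - ri) (ro - d) (rng x y xT yT s - d))
      ((R - d) * eta (d - ri) (ro - d) (R - d) * (v * ebx x y θ xT yT t / R)) t := by
    have hD := Vr_hasDerivAt (d - ri) (ro - d) (by linarith) (by linarith) (R - d)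
      (by have := hgood.1; linarith)
      (by have := hgood.2; linarith)
    exact hD.comp t (hr.sub_const d)
  -- derivative of beta
  have hbeta : HasDerivAt (beta x y z κ xT yT)
      (-κ * (beta x y z κ xT yT t) + v * ebx x y θ xT yT t) t := by
    have h1 := (hz.const_mul (-κ)).add ((hr.pow 2).const_mul (1/2 : ℝ))
    convert h1 using 1
    any_goals rfl
    rw [beta, ← hR]
    field_simp
    push_cast
    ring
  -- derivative of the integral term
  have hint : HasDerivAt (fun s => ∫ τ in (0:ℝ)..(beta x y z κ xT yT s), Ω τ)
      (Ω (beta x y z κ xT yT t) * (-κ * (beta x y z κ xT yT t) + v * ebx x y θ xT yT t)) t := by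
    have hF : HasDerivAt (fun u => ∫ τ in (0:ℝ)..u, Ω τ) (Ω (beta x y z κ xT yT t))
        (beta x y z κ xT yT t) :=
      intervalIntegral.integral_hasDerivAt_right
        (hΩcont.intervalIntegrable 0 _)
        (hΩcont.stronglyMeasurableAtFilter _ _)
        hΩcont.continuousAt
    exact hF.comp t hbeta
  -- assemble
  have hsum := (((hebx.pow 2).add (heby.pow 2)).const_mul (1/2 : ℝ)).add
      ((hVrt.const_mul (d * k2)).add (hint.const_mul (d * k1)))
  have hfun : (fun s => (1/2 : ℝ) * ((ebx x y θ xT yT s) ^ 2 + (eby x y θ xT yT d s) ^ 2) +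
        (d * k2 * Vr (d - ri) (ro - d) (rng x y xT yT s - d) +
        d * k1 * ∫ τ in (0:ℝ)..(beta x y z κ xT yT s), Ω τ)) =
      (fun s => (1/2 : ℝ) * ((ebx x y θ xT yT s) ^ 2 + (eby x y θ xT yT d s) ^ 2) +
        d * k2 * Vr (d - ri) (ro - d) (rng x y xT yT s - d) +
        d * k1 * ∫ τ in (0:ℝ)..(beta x y z κ xT yT s), Ω τ) := by
    funext s; ring
  rw [← hfun]
  convert hsum using 1
  any_goals rfl
  push_cast
  rw [hωdef]
  field_simp
  ring

set_option maxHeartbeats 1000000 in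
/-- Theorem 4(a),(b): Under the hypotheses of Theorem 2, with
V₂(0) = (1/2)(ē_x(0)² + ē_y(0)²) + d·k₂·V_r(r(0) − d) + d·k₁·∫₀^{β(0)} Ω and
Υ₂ = √(1 − exp(−2·V₂(0)/(d·k₂))), for all t ≥ 0:
ē_x(t)² + ē_y(t)² ≤ 2·V₂(0), −δ_a·Υ₂ ≤ r(t) − d ≤ δ_b·Υ₂ and
r_i + δ_a·(1 − Υ₂) ≤ r(t) ≤ r_o − δ_b·(1 − Υ₂). -/
theorem theorem4ab_bounds
    (x y θ z : ℝ → ℝ) (Ω : ℝ → ℝ) (v d k1 k2 κ ri ro xT yT : ℝ)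
    (hΩcont : Continuous Ω) (hΩ0 : Ω 0 = 0) (hΩpos : ∀ s : ℝ, s ≠ 0 → 0 < s * Ω s)
    (hv : v ≠ 0) (hri : 0 < ri) (hrid : ri < d) (hdro : d < ro)
    (hk1 : 0 < k1) (hk2 : 0 < k2) (hκ : 0 < κ)
    (hxdiff : ∀ t ≥ (0 : ℝ), DifferentiableAt ℝ x t)
    (hydiff : ∀ t ≥ (0 : ℝ), DifferentiableAt ℝ y t)
    (hθdiff : ∀ t ≥ (0 : ℝ), DifferentiableAt ℝ θ t)
    (hzdiff : ∀ t ≥ (0 : ℝ), DifferentiableAt ℝ z t)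
    (hclosedloop : ∀ t ≥ (0 : ℝ), rng x y xT yT t ∈ Set.Ioo ri ro →
      HasDerivAt x (v * Real.cos (θ t)) t ∧
      HasDerivAt y (v * Real.sin (θ t)) t ∧
      HasDerivAt z (-κ * z t + (1 / 2) * (rng x y xT yT t) ^ 2) t ∧
      HasDerivAt θ (v / d + v * k1 * Ω (beta x y z κ xT yT t) +
        v * k2 * ((rng x y xT yT t - d) / rng x y xT yT t) *
          eta (d - ri) (ro - d) (rng x y xT yT t - d)) t)
    (hr0 : rng x y xT yT 0 ∈ Set.Ioo ri ro)
    (V20 Υ₂ : ℝ)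
    (hV20 : V20 = (1 / 2) * ((ebx x y θ xT yT 0) ^ 2 + (eby x y θ xT yT d 0) ^ 2) +
      d * k2 * Vr (d - ri) (ro - d) (rng x y xT yT 0 - d) +
      d * k1 * ∫ τ in (0 : ℝ)..(beta x y z κ xT yT 0), Ω τ)
    (hΥ₂ : Υ₂ = Real.sqrt (1 - Real.exp (-(2 * V20) / (d * k2)))) :
    ∀ t ≥ (0 : ℝ),
      ((ebx x y θ xT yT t) ^ 2 + (eby x y θ xT yT d t) ^ 2 ≤ 2 * V20) ∧
      (-(d - ri) * Υ₂ ≤ rng x y xT yT t - d ∧ rng x y xT yT t - d ≤ (ro - d) * Υ₂) ∧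
      (ri + (d - ri) * (1 - Υ₂) ≤ rng x y xT yT t ∧
        rng x y xT yT t ≤ ro - (ro - d) * (1 - Υ₂)) := by
  have hd : 0 < d := lt_trans hri hrid
  have hδa : 0 < d - ri := by linarith
  have hδb : 0 < ro - d := by linarith
  have hdk2 : 0 < d * k2 := by positivity
  set V : ℝ → ℝ := fun s =>
      (1 / 2) * ((ebx x y θ xT yT s) ^ 2 + (eby x y θ xT yT d s) ^ 2) +
      d * k2 * Vr (d - ri) (ro - d) (rng x y xT yT s - d) +
      d * k1 * ∫ τ in (0:ℝ)..(beta x y z κ xT yT s), Ω τ with hVdef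
  -- derivative of V at good times
  have hVd : ∀ s : ℝ, 0 ≤ s → rng x y xT yT s ∈ Set.Ioo ri ro →
      HasDerivAt V (-(d * k1 * κ * (beta x y z κ xT yT s) * Ω (beta x y z κ xT yT s))) s := by
    intro s hs hgd
    obtain ⟨hx, hy, hz, hθ⟩ := hclosedloop s hs hgd
    exact V_hasDerivAt x y θ z Ω v d k1 k2 κ ri ro xT yT hΩcont hri hrid hdro s hs hgd hx hy hz hθ
  have hderiv_nonpos : ∀ s : ℝ,
      -(d * k1 * κ * (beta x y z κ xT yT s) * Ω (beta x y z κ xT yT s)) ≤ 0 := by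
    intro s
    rcases eq_or_ne (beta x y z κ xT yT s) 0 with h | h
    · rw [h, hΩ0]; ring_nf; exact le_rfl
    · have h1 : 0 < d * k1 * κ := by positivity
      nlinarith [mul_pos h1 (hΩpos _ h)]
  -- continuity of the range
  have hrc : ∀ t : ℝ, 0 ≤ t → ContinuousAt (rng x y xT yT) t := by
    intro t ht
    have h1 : ContinuousAt (fun s => (x s - xT) ^ 2 + (y s - yT) ^ 2) t := by
      exact (((hxdiff t ht).continuousAt.sub continuousAt_const).pow 2).add
        (((hydiff t ht).continuousAt.sub continuousAt_const).pow 2)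
    exact Real.continuous_sqrt.continuousAt.comp h1
  -- monotonicity of V on good intervals
  have hmono : ∀ T : ℝ, 0 ≤ T → (∀ s : ℝ, 0 ≤ s → s ≤ T → rng x y xT yT s ∈ Set.Ioo ri ro) →
      V T ≤ V 0 := by
    intro T hT hgd
    rcases eq_or_lt_of_le hT with h | h
    · rw [← h]
    have hanti := antitoneOn_of_deriv_nonpos (convex_Icc (0:ℝ) T)
      (fun s hs => (hVd s hs.1 (hgd s hs.1 hs.2)).continuousAt.continuousWithinAt)
      (fun s hs => by
        rw [interior_Icc] at hs
        exact (hVd s (le_of_lt hs.1) (hgd s (le_of_lt hs.1) (le_of_lt hs.2))).differentiableAt.differentiableWithinAt)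
      (fun s hs => by
        rw [interior_Icc] at hs
        rw [(hVd s (le_of_lt hs.1) (hgd s (le_of_lt hs.1) (le_of_lt hs.2))).deriv]
        exact hderiv_nonpos s)
    exact hanti (Set.left_mem_Icc.mpr hT) (Set.right_mem_Icc.mpr hT) hT
  have hV0 : V 0 = V20 := hV20.symm
  -- nonnegativity facts and Υ₂
  have hV20nn : 0 ≤ V20 := by
    rw [hV20]
    have h1 := Vr_nonneg (d - ri) (ro - d) hδa hδb (rng x y xT yT 0 - d)
      (by have := hr0.1; linarith) (by have := hr0.2; linarith)
    have h2 := integral_Omega_nonneg Ω hΩcont hΩ0 hΩpos (beta x y z κ xT yT 0)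
    positivity
  have hΥnn : 0 ≤ Υ₂ := by rw [hΥ₂]; exact Real.sqrt_nonneg _
  have hexple : Real.exp (-(2 * V20) / (d * k2)) ≤ 1 := by
    apply Real.exp_le_one_iff.mpr
    apply div_nonpos_of_nonpos_of_nonneg (by linarith) (le_of_lt hdk2)
  have hΥsq : Υ₂ ^ 2 = 1 - Real.exp (-(2 * V20) / (d * k2)) := by
    rw [hΥ₂]; exact Real.sq_sqrt (by linarith)
  have hΥlt1 : Υ₂ < 1 := by
    have h1 : Υ₂ ^ 2 < 1 := by
      rw [hΥsq]
      linarith [Real.exp_pos (-(2 * V20) / (d * k2))]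
    nlinarith
  -- the a-priori state bound from V ≤ V20
  have hstate : ∀ t : ℝ, 0 ≤ t → rng x y xT yT t ∈ Set.Ioo ri ro → V t ≤ V20 →
      ((ebx x y θ xT yT t) ^ 2 + (eby x y θ xT yT d t) ^ 2 ≤ 2 * V20) ∧
      (-(d - ri) * Υ₂ ≤ rng x y xT yT t - d ∧ rng x y xT yT t - d ≤ (ro - d) * Υ₂) ∧
      (ri + (d - ri) * (1 - Υ₂) ≤ rng x y xT yT t ∧
        rng x y xT yT t ≤ ro - (ro - d) * (1 - Υ₂)) := by
    intro t ht hgd hVle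
    have h1 := Vr_nonneg (d - ri) (ro - d) hδa hδb (rng x y xT yT t - d)
      (by have := hgd.1; linarith) (by have := hgd.2; linarith)
    have h2 := integral_Omega_nonneg Ω hΩcont hΩ0 hΩpos (beta x y z κ xT yT t)
    have hVt : V t = (1 / 2) * ((ebx x y θ xT yT t) ^ 2 + (eby x y θ xT yT d t) ^ 2) +
      d * k2 * Vr (d - ri) (ro - d) (rng x y xT yT t - d) +
      d * k1 * ∫ τ in (0:ℝ)..(beta x y z κ xT yT t), Ω τ := rfl
    rw [hVt] at hVle
    have hsq : 0 ≤ (ebx x y θ xT yT t) ^ 2 + (eby x y θ xT yT d t) ^ 2 := by positivity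
    have hpos1 : 0 ≤ d * k2 * Vr (d - ri) (ro - d) (rng x y xT yT t - d) :=
      mul_nonneg (le_of_lt hdk2) h1
    have hpos2 : 0 ≤ d * k1 * ∫ τ in (0:ℝ)..(beta x y z κ xT yT t), Ω τ :=
      mul_nonneg (mul_nonneg hd.le hk1.le) h2
    have hb1 : (ebx x y θ xT yT t) ^ 2 + (eby x y θ xT yT d t) ^ 2 ≤ 2 * V20 := by
      linarith
    have hVrle : Vr (d - ri) (ro - d) (rng x y xT yT t - d) ≤ V20 / (d * k2) := by
      rw [le_div_iff₀ hdk2]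
      linarith
    have hbb := Vr_bound (d - ri) (ro - d) hδa hδb (rng x y xT yT t - d) (V20 / (d * k2))
      (by have := hgd.1; linarith) (by have := hgd.2; linarith) hVrle
    have hΥeq : Real.sqrt (1 - Real.exp (-(2 * (V20 / (d * k2))))) = Υ₂ := by
      rw [hΥ₂]
      congr 1
      rw [neg_div]
      ring_nf
    rw [hΥeq] at hbb
    refine ⟨hb1, ⟨hbb.1, hbb.2⟩, ?_, ?_⟩
    · nlinarith [hbb.1]
    · nlinarith [hbb.2]
  -- invariance of the good region
  have hgood : ∀ t : ℝ, 0 ≤ t → rng x y xT yT t ∈ Set.Ioo ri ro := by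
    by_contra hc
    push_neg at hc
    obtain ⟨t0, ht0, hbad0⟩ := hc
    set bad : Set ℝ := {s : ℝ | 0 ≤ s ∧ rng x y xT yT s ∉ Set.Ioo ri ro} with hbaddef
    have hne : bad.Nonempty := ⟨t0, ht0, hbad0⟩
    have hbdd : BddBelow bad := ⟨0, fun s hs => hs.1⟩
    set T := sInf bad with hTdef
    have hT0 : 0 ≤ T := le_csInf hne (fun s hs => hs.1)
    -- T is positive
    have hev0 : {s : ℝ | rng x y xT yT s ∈ Set.Ioo ri ro} ∈ nhds (0:ℝ) :=
      (hrc 0 le_rfl).preimage_mem_nhds (isOpen_Ioo.mem_nhds hr0)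
    obtain ⟨ε, hε, hball⟩ := Metric.mem_nhds_iff.mp hev0
    have hTpos : 0 < T := by
      have : ε ≤ T := by
        apply le_csInf hne
        intro s hs
        by_contra hlt
        push_neg at hlt
        exact hs.2 (hball (by
          rw [Metric.mem_ball, Real.dist_eq, sub_zero, abs_of_nonneg hs.1]
          exact hlt))
      linarith
    have hgoodlt : ∀ s : ℝ, 0 ≤ s → s < T → rng x y xT yT s ∈ Set.Ioo ri ro := by
      intro s h1 h2
      by_contra hc2
      exact absurd (csInf_le hbdd ⟨h1, hc2⟩) (not_le.mpr h2)
    have hgoodT : rng x y xT yT T ∈ Set.Ioo ri ro := by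
      have hcw : Filter.Tendsto (rng x y xT yT) (nhdsWithin T (Set.Ico 0 T))
          (nhds (rng x y xT yT T)) := (hrc T hT0).continuousWithinAt
      have hnb : (nhdsWithin T (Set.Ico 0 T)).NeBot := by
        apply mem_closure_iff_nhdsWithin_neBot.mp
        rw [closure_Ico (ne_of_lt hTpos)]
        exact ⟨hT0, le_rfl⟩
      have hIcc : rng x y xT yT T ∈
          Set.Icc (ri + (d - ri) * (1 - Υ₂)) (ro - (ro - d) * (1 - Υ₂)) := by
        apply isClosed_Icc.mem_of_tendsto hcw
        apply Filter.eventually_of_mem self_mem_nhdsWithin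
        intro s hs
        have hgs : ∀ u : ℝ, 0 ≤ u → u ≤ s → rng x y xT yT u ∈ Set.Ioo ri ro :=
          fun u hu1 hu2 => hgoodlt u hu1 (lt_of_le_of_lt hu2 hs.2)
        have hVs := hmono s hs.1 hgs
        rw [hV0] at hVs
        exact ⟨((hstate s hs.1 (hgoodlt s hs.1 hs.2) hVs).2.2).1,
          ((hstate s hs.1 (hgoodlt s hs.1 hs.2) hVs).2.2).2⟩
      constructor
      · have := hIcc.1
        nlinarith
      · have := hIcc.2
        nlinarith
    -- contradiction: good extends past T
    have hevT : {s : ℝ | rng x y xT yT s ∈ Set.Ioo ri ro} ∈ nhds T :=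
      (hrc T hT0).preimage_mem_nhds (isOpen_Ioo.mem_nhds hgoodT)
    obtain ⟨ε', hε', hball'⟩ := Metric.mem_nhds_iff.mp hevT
    have hlb : T + ε' ≤ T := by
      apply le_csInf hne
      intro s hs
      rcases lt_or_ge s T with h | h
      · exact absurd (hgoodlt s hs.1 h) hs.2
      · rcases lt_or_ge s (T + ε') with h2 | h2
        · exact absurd (hball' (by
            rw [Metric.mem_ball, Real.dist_eq, abs_of_nonneg (by linarith)]
            linarith)) hs.2
        · exact h2
    linarith
  -- conclude
  intro t ht
  apply hstate t ht (hgood t ht)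
  rw [← hV0]
  exact hmono t ht (fun s hs1 hs2 => hgood s hs1)
end
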